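/- If G is a simple graph with maximum degree at most 2 and matching number at most ν − 1, then |E(G)| ≤ 3(ν − 1). -/

import Mathlib

open SimpleGraph

/-- `H` is a minor of `G`: branch sets are nonempty, connected, pairwise disjoint,
and adjacency of `H` is witnessed by edges between branch sets. -/
def SimpleGraph.HasMinor {V W : Type*} (G : SimpleGraph V) (H : SimpleGraph W) : Prop :=
  ∃ f : W → Set V,
    (∀ w, (f w).Nonempty) ∧
    (∀ w, (G.induce (f w)).Connected) ∧
    (∀ w₁ w₂, w₁ ≠ w₂ → Disjoint (f w₁) (f w₂)) ∧
    ∀ w₁ w₂, H.Adj w₁ w₂ → ∃ v₁ ∈ f w₁, ∃ v₂ ∈ f w₂, G.Adj v₁ v₂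

/-- Planarity via Wagner's theorem: no `K₅` minor and no `K₃,₃` minor. -/
def SimpleGraph.Planar {V : Type*} (G : SimpleGraph V) : Prop :=
  ¬ G.HasMinor (completeGraph (Fin 5)) ∧
  ¬ G.HasMinor (completeBipartiteGraph (Fin 3) (Fin 3))

/-- Outerplanarity: no `K₄` minor and no `K₂,₃` minor. -/
def SimpleGraph.Outerplanar {V : Type*} (G : SimpleGraph V) : Prop :=
  ¬ G.HasMinor (completeGraph (Fin 4)) ∧
  ¬ G.HasMinor (completeBipartiteGraph (Fin 2) (Fin 3))

/-- The matching number: the largest number of edges of a matching. -/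
noncomputable def SimpleGraph.matchingNumber {V : Type*} (G : SimpleGraph V) : ℕ :=
  sSup {n | ∃ M : G.Subgraph, M.IsMatching ∧ M.edgeSet.ncard = n}

/-- A proper edge coloring: edges sharing an endpoint get distinct colors. -/
def SimpleGraph.IsProperEdgeColoring {V : Type*} {k : ℕ} (G : SimpleGraph V)
    (c : G.edgeSet → Fin k) : Prop :=
  ∀ e f : G.edgeSet, e ≠ f → (∃ v, v ∈ (e : Sym2 V) ∧ v ∈ (f : Sym2 V)) → c e ≠ c f

/-- A graph is factor-critical if deleting any vertex leaves a graph with a perfect matching. -/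
def SimpleGraph.FactorCritical {V : Type*} (G : SimpleGraph V) : Prop :=
  ∀ v : V, ∃ M : (G.induce ({v}ᶜ : Set V)).Subgraph, M.IsPerfectMatching

/-- `K₅` minus the edge between vertices `0` and `1`. -/
def K5minus : SimpleGraph (Fin 5) where
  Adj v w := v ≠ w ∧ ¬(v = 0 ∧ w = 1) ∧ ¬(v = 1 ∧ w = 0)
  symm := ⟨fun v w h => ⟨h.1.symm, fun hc => h.2.2 ⟨hc.2, hc.1⟩, fun hc => h.2.1 ⟨hc.2, hc.1⟩⟩⟩
  loopless := ⟨fun v h => h.1 rfl⟩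

instance : DecidableRel K5minus.Adj := fun v w =>
  inferInstanceAs (Decidable (v ≠ w ∧ ¬(v = 0 ∧ w = 1) ∧ ¬(v = 1 ∧ w = 0)))

section Helpers

variable {V : Type*} [Fintype V] [DecidableEq V]

private lemma mn_bdd (G : SimpleGraph V) :
    BddAbove {n | ∃ M : G.Subgraph, M.IsMatching ∧ M.edgeSet.ncard = n} :=
  ⟨G.edgeSet.ncard, by
    rintro n ⟨M, -, rfl⟩
    exact Set.ncard_le_ncard M.edgeSet_subset (Set.toFinite _)⟩

private lemma mn_zero_mem (G : SimpleGraph V) :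
    (0 : ℕ) ∈ {n | ∃ M : G.Subgraph, M.IsMatching ∧ M.edgeSet.ncard = n} :=
  ⟨⊥, by intro v hv; simp at hv, by simp⟩

private lemma le_mn {G : SimpleGraph V} {M : G.Subgraph} (hM : M.IsMatching) :
    M.edgeSet.ncard ≤ G.matchingNumber :=
  le_csSup (mn_bdd G) ⟨M, hM, rfl⟩

private lemma exists_mn (G : SimpleGraph V) :
    ∃ M : G.Subgraph, M.IsMatching ∧ M.edgeSet.ncard = G.matchingNumber :=
  Nat.sSup_mem ⟨0, mn_zero_mem G⟩ (mn_bdd G)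

private lemma degree_mono {G H : SimpleGraph V} [DecidableRel G.Adj] [DecidableRel H.Adj]
    (h : G ≤ H) (v : V) : G.degree v ≤ H.degree v := by
  apply Finset.card_le_card
  intro w hw
  rw [SimpleGraph.mem_neighborFinset] at hw ⊢
  exact h hw

private lemma key (n : ℕ) : ∀ (G : SimpleGraph V) [DecidableRel G.Adj],
    G.edgeFinset.card = n → (∀ v, G.degree v ≤ 2) →
    G.edgeFinset.card ≤ 3 * G.matchingNumber := by
  induction n using Nat.strong_induction_on with
  | _ n IH =>
    intro G _ hn hdeg
    rcases Finset.eq_empty_or_nonempty G.edgeFinset with he | hne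
    · simp [he]
    · have hab : ∃ a b, G.Adj a b := by
        obtain ⟨e, he⟩ := hne
        rw [SimpleGraph.mem_edgeFinset] at he
        induction e using Sym2.ind with
        | _ a b => exact ⟨a, b, he⟩
      obtain ⟨a, b, hab⟩ := hab
      set s : Set (Sym2 V) := G.incidenceSet a ∪ G.incidenceSet b with hs
      set G' := G.deleteEdges s with hG'
      haveI : DecidableRel G'.Adj := Classical.decRel _
      have hle : G' ≤ G := G.deleteEdges_le s
      have hdeg' : ∀ v, G'.degree v ≤ 2 := fun v => (degree_mono hle v).trans (hdeg v)
      have hsub : G'.edgeFinset ⊆ G.edgeFinset := edgeFinset_mono hle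
      have hemem : s(a, b) ∈ G.edgeFinset := by
        rw [SimpleGraph.mem_edgeFinset]; exact hab
      have henot : s(a, b) ∉ G'.edgeFinset := by
        rw [SimpleGraph.mem_edgeFinset, hG', edgeSet_deleteEdges]
        intro hf
        exact hf.2 (Or.inl ((G.mk'_mem_incidenceSet_left_iff).2 hab))
      -- strict decrease of edge count
      have hlt : G'.edgeFinset.card < n := by
        rw [← hn]
        exact Finset.card_lt_card ((Finset.ssubset_iff_of_subset hsub).2
          ⟨s(a, b), hemem, henot⟩)
      have hIH := IH _ hlt G' rfl hdeg'
      -- edge count bound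
      have hcard : G.edgeFinset.card ≤ G'.edgeFinset.card + 3 := by
        have h1 : G.edgeFinset \ G'.edgeFinset ⊆ G.incidenceFinset a ∪ G.incidenceFinset b := by
          intro f hf
          rw [Finset.mem_sdiff, SimpleGraph.mem_edgeFinset, SimpleGraph.mem_edgeFinset,
            hG', edgeSet_deleteEdges] at hf
          have : f ∈ s := by
            by_contra hfs
            exact hf.2 ⟨hf.1, hfs⟩
          rw [Finset.mem_union, SimpleGraph.mem_incidenceFinset, SimpleGraph.mem_incidenceFinset]
          exact this
        have h2 : (G.incidenceFinset a ∪ G.incidenceFinset b).card ≤ 3 := by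
          have hu := Finset.card_union_add_card_inter (G.incidenceFinset a) (G.incidenceFinset b)
          have hmem : s(a, b) ∈ G.incidenceFinset a ∩ G.incidenceFinset b := by
            rw [Finset.mem_inter, SimpleGraph.mem_incidenceFinset,
              SimpleGraph.mem_incidenceFinset]
            exact ⟨(G.mk'_mem_incidenceSet_left_iff).2 hab,
              (G.mk'_mem_incidenceSet_right_iff).2 hab⟩
          have hpos : 1 ≤ (G.incidenceFinset a ∩ G.incidenceFinset b).card :=
            Finset.card_pos.2 ⟨_, hmem⟩
          have hda := G.card_incidenceFinset_eq_degree (v := a)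
          have hdb := G.card_incidenceFinset_eq_degree (v := b)
          have := hdeg a
          have := hdeg b
          omega
        have h3 := Finset.card_sdiff_add_card_eq_card hsub
        have h4 := Finset.card_le_card h1
        omega
      -- matching step
      obtain ⟨M', hM', hcM'⟩ := exists_mn G'
      have hmapAdj : ∀ v w, (M'.map (Hom.ofLE hle)).Adj v w ↔ M'.Adj v w := by
        intro v w
        simp [Subgraph.map_adj, Relation.Map]
      have hverts : ∀ v ∈ M'.verts, v ≠ a ∧ v ≠ b := by
        intro v hv
        obtain ⟨w, hw, -⟩ := hM' hv
        have hGw : G'.Adj v w := M'.adj_sub hw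
        rw [hG', SimpleGraph.deleteEdges_adj] at hGw
        constructor
        · rintro rfl
          exact hGw.2 (Or.inl ((G.mk'_mem_incidenceSet_left_iff).2 hGw.1))
        · rintro rfl
          exact hGw.2 (Or.inr ((G.mk'_mem_incidenceSet_left_iff).2 hGw.1))
      have hmapverts : (M'.map (Hom.ofLE hle)).verts = M'.verts := by
        rw [Subgraph.map_verts, Hom.coe_ofLE, Set.image_id]
      have hdisj : Disjoint (M'.map (Hom.ofLE hle)).support (G.subgraphOfAdj hab).support := by
        rw [Set.disjoint_left]
        intro x hx hx'
        have hxv : x ∈ M'.verts := by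
          rw [← hmapverts]
          exact (M'.map (Hom.ofLE hle)).support_subset_verts hx
        rw [SimpleGraph.support_subgraphOfAdj] at hx'
        obtain ⟨hxa, hxb⟩ := hverts x hxv
        rcases hx' with rfl | rfl
        · exact hxa rfl
        · exact hxb rfl
      have hNmatch : ((M'.map (Hom.ofLE hle)) ⊔ G.subgraphOfAdj hab).IsMatching :=
        (hM'.map_ofLE hle).sup (Subgraph.IsMatching.subgraphOfAdj hab) hdisj
      have hmapEdge : (M'.map (Hom.ofLE hle)).edgeSet = M'.edgeSet := by
        ext e
        induction e using Sym2.ind with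
        | _ v w =>
          rw [Subgraph.mem_edgeSet, Subgraph.mem_edgeSet]
          exact hmapAdj v w
      have heNotM' : s(a, b) ∉ M'.edgeSet := by
        rw [Subgraph.mem_edgeSet]
        intro hAdj
        have := M'.adj_sub hAdj
        rw [hG', SimpleGraph.deleteEdges_adj] at this
        exact this.2 (Or.inl ((G.mk'_mem_incidenceSet_left_iff).2 this.1))
      have hNedge : ((M'.map (Hom.ofLE hle)) ⊔ G.subgraphOfAdj hab).edgeSet.ncard
          = G'.matchingNumber + 1 := by
        rw [Subgraph.edgeSet_sup, hmapEdge, SimpleGraph.edgeSet_subgraphOfAdj,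
          Set.ncard_union_eq (by simpa using heNotM') (Set.toFinite _) (Set.toFinite _),
          Set.ncard_singleton, hcM']
      have hν : G'.matchingNumber + 1 ≤ G.matchingNumber := by
        rw [← hNedge]
        exact le_mn hNmatch
      omega

end Helpers

theorem stmt14 {V : Type*} [Fintype V] [DecidableEq V] (G : SimpleGraph V) [DecidableRel G.Adj]
    (ν : ℕ)
    (hdeg : ∀ v : V, G.degree v ≤ 2) (hm : G.matchingNumber ≤ ν - 1) :
    G.edgeFinset.card ≤ 3 * (ν - 1) := by
  have h := key G.edgeFinset.card G rfl hdeg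
  omega
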